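/- Let α > 0 and let h : ℕ² → ℝ₊ satisfy: (i) h(τ₁+t, τ₂+t) = h(τ₁,τ₂) for all t, and (ii) ∑_{τ₂ > τ₁} h(τ₁, τ₂) ≤ 1 for each fixed τ₁. Fix an integer ℓ ≥ 2 and partition ℕ into blocks I_{τ'} = {ℓ²(τ'−1)+1, …, ℓ²τ'}. Then ∑_{τ'₁ : τ'₁ < τ'₂ − 1} (1 + τ'₂ − τ'₁)^α ∑_{τ₁ ∈ I_{τ'₁}, τ₂ ∈ I_{τ'₂}} h(τ₁,τ₂)(1+τ₂−τ₁)^{-α} (max I_{τ'₂} − τ₂ + 1)^{-1/2} ≤ C ℓ^{1−2α} for a constant C depending only on α (using that τ₂ − τ₁ ≥ (ℓ²/2)(τ'₂ − τ'₁) in the region τ'₁ < τ'₂ − 1 gives (1+τ'₂−τ'₁)^α ≤ C ℓ^{-2α}(1+τ₂−τ₁)^α). -/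

import Mathlib

lemma sum_inv_sqrt (n : ℕ) :
    ∑ k ∈ Finset.Icc 1 n, (k : ℝ) ^ (-(1/2) : ℝ) ≤ 2 * Real.sqrt n := by
  induction n with
  | zero => simp
  | succ n ih =>
    rw [Finset.sum_Icc_succ_top (by omega)]
    set s1 := Real.sqrt n with hs1
    set s2 := Real.sqrt ((n:ℕ)+1) with hs2
    have hs1n : 0 ≤ s1 := Real.sqrt_nonneg _
    have hs2p : 0 < s2 := Real.sqrt_pos.2 (by positivity)
    have e1 : s1 ^ 2 = (n : ℝ) := Real.sq_sqrt (by positivity)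
    have e2 : s2 ^ 2 = (n:ℝ) + 1 := by
      rw [hs2, Real.sq_sqrt (by positivity)]
    have key : ((n+1 : ℕ) : ℝ) ^ (-(1/2) : ℝ) = s2⁻¹ := by
      rw [Real.rpow_neg (by positivity), ← Real.sqrt_eq_rpow]
      norm_num
      exact hs2.symm
    have ht : s1 * s2 ≤ (n:ℝ) + 1/2 := by
      nlinarith [sq_nonneg (s1 - s2)]
    have hinv : s2⁻¹ * s2 = 1 := inv_mul_cancel₀ (ne_of_gt hs2p)
    have hsqcast : Real.sqrt ((n+1 : ℕ) : ℝ) = s2 := by push_cast; rfl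
    rw [key, hsqcast]
    have hstep : s2⁻¹ ≤ 2 * s2 - 2 * s1 := by
      nlinarith [inv_nonneg.2 hs2p.le]
    linarith

lemma block_union (L : ℕ) (f : ℕ → ℝ) (m : ℕ) :
    ∑ τ ∈ Finset.Ico 1 m, ∑ i ∈ Finset.Icc (L * (τ - 1) + 1) (L * τ), f i
      = ∑ i ∈ Finset.Icc 1 (L * (m - 1)), f i := by
  induction m with
  | zero => simp
  | succ m ih =>
    rcases Nat.eq_zero_or_pos m with hm | hm
    · subst hm; simp
    rw [Finset.sum_Ico_succ_top (by omega), ih]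
    have h1 : Finset.Icc 1 (L * (m - 1)) = Finset.Ioc 0 (L * (m - 1)) := Finset.Icc_add_one_left_eq_Ioc 0 _
    have h2 : Finset.Icc (L * (m - 1) + 1) (L * m) = Finset.Ioc (L * (m - 1)) (L * m) :=
      Finset.Icc_add_one_left_eq_Ioc _ _
    have h3 : Finset.Icc 1 (L * (m + 1 - 1)) = Finset.Ioc 0 (L * m) := by
      rw [Nat.add_sub_cancel]; exact Finset.Icc_add_one_left_eq_Ioc 0 _
    rw [h1, h2, h3]
    exact Finset.sum_Ioc_consecutive f (Nat.zero_le _) (Nat.mul_le_mul_left L (by omega))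

lemma trans_bound (h : ℕ → ℕ → ℝ)
    (hinv : ∀ τ₁ τ₂ t, h (τ₁ + t) (τ₂ + t) = h τ₁ τ₂)
    (hsum : ∀ τ₁ (F : Finset ℕ), ∑ τ₂ ∈ F, (if τ₁ < τ₂ then h τ₁ τ₂ else 0) ≤ 1)
    (τ₂ : ℕ) (F : Finset ℕ) (hF : ∀ x ∈ F, x < τ₂) :
    ∑ τ₁ ∈ F, h τ₁ τ₂ ≤ 1 := by
  have himg : ∑ s ∈ F.image (fun τ₁ => τ₂ - τ₁), (if 0 < s then h 0 s else 0) ≤ 1 :=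
    hsum 0 _
  rw [Finset.sum_image (by intro a ha b hb hab; have := hF a ha; have := hF b hb; simp only at hab; omega)] at himg
  calc ∑ τ₁ ∈ F, h τ₁ τ₂ = ∑ τ₁ ∈ F, (if 0 < τ₂ - τ₁ then h 0 (τ₂ - τ₁) else 0) := by
        apply Finset.sum_congr rfl
        intro x hx
        have hx2 := hF x hx
        rw [if_pos (by omega)]
        have hh := hinv 0 (τ₂ - x) x
        rw [Nat.zero_add] at hh
        rw [← hh]
        congr 1
        omega
    _ ≤ 1 := himg

lemma reindex_sqrt (b L : ℕ) (hL : L ≤ b) (e : ℝ) :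
    ∑ τ ∈ Finset.Icc (b - L + 1) b, ((b:ℝ) - (τ:ℝ) + 1) ^ e
      = ∑ k ∈ Finset.Icc 1 L, (k:ℝ) ^ e := by
  apply Finset.sum_nbij' (i := fun τ => b + 1 - τ) (j := fun k => b + 1 - k)
  · intro a ha; simp only [Finset.mem_Icc] at *; omega
  · intro a ha; simp only [Finset.mem_Icc] at *; omega
  · intro a ha; simp only [Finset.mem_Icc] at *; omega
  · intro a ha; simp only [Finset.mem_Icc] at *; omega
  · intro a ha
    simp only [Finset.mem_Icc] at ha
    congr 1
    have : a ≤ b + 1 := by omega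
    push_cast [Nat.cast_sub this]
    ring

lemma rpow_key (α : ℝ) (hα : 0 < α) (l : ℕ) (hl : 2 ≤ l) (a b : ℝ)
    (ha : 1 ≤ a) (hb : 0 < b) (hab : (l:ℝ)^2 * a ≤ 4 * b) :
    a ^ α * b ^ (-α) ≤ 4 ^ α * (l:ℝ) ^ (-(2*α)) := by
  have hl0 : (0:ℝ) < (l:ℝ) := by positivity
  have hLr : (0:ℝ) < (l:ℝ)^2 := by positivity
  have h1 : a ≤ (4 / (l:ℝ)^2) * b := by
    rw [div_mul_eq_mul_div, le_div_iff₀ hLr]; linarith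
  have h2 : a ^ α ≤ ((4 / (l:ℝ)^2) * b) ^ α :=
    Real.rpow_le_rpow (by linarith) h1 hα.le
  have h3 : ((4 / (l:ℝ)^2) * b) ^ α = (4 / (l:ℝ)^2) ^ α * b ^ α :=
    Real.mul_rpow (by positivity) hb.le
  have h4 : a ^ α * b ^ (-α) ≤ (4 / (l:ℝ)^2) ^ α * b ^ α * b ^ (-α) := by
    apply mul_le_mul_of_nonneg_right _ (Real.rpow_nonneg hb.le _)
    rw [← h3]; exact h2
  have h5 : (4 / (l:ℝ)^2) ^ α * b ^ α * b ^ (-α) = (4 / (l:ℝ)^2) ^ α := by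
    rw [mul_assoc, ← Real.rpow_add hb]; simp
  have h6 : (4 / (l:ℝ)^2) ^ α = 4 ^ α * (l:ℝ) ^ (-(2*α)) := by
    rw [Real.div_rpow (by norm_num) hLr.le]
    rw [div_eq_mul_inv]
    congr 1
    rw [← Real.rpow_natCast (l:ℝ) 2, ← Real.rpow_mul hl0.le, ← Real.rpow_neg hl0.le]
    norm_num
  rw [← h6]; linarith

/-- Linear RG two-point sum estimate: for α > 0 there is C = C(α) such that for every
integer ℓ ≥ 2, every nonnegative, time-translation-invariant h with
∑_{τ₂ > τ₁} h(τ₁,τ₂) ≤ 1, and every τ'₂,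
∑_{1 ≤ τ'₁ < τ'₂−1} (1+τ'₂−τ'₁)^α ∑_{τ₁ ∈ I_{τ'₁}} ∑_{τ₂ ∈ I_{τ'₂}}
  h(τ₁,τ₂)(1+τ₂−τ₁)^{-α}(max I_{τ'₂} − τ₂ + 1)^{-1/2} ≤ C ℓ^{1−2α},
where I_{τ'} = {ℓ²(τ'−1)+1, …, ℓ²τ'}. -/
theorem stmt16 (α : ℝ) (hα : 0 < α) :
    ∃ C : ℝ, 0 < C ∧ ∀ (l : ℕ), 2 ≤ l → ∀ (h : ℕ → ℕ → ℝ),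
      (∀ τ₁ τ₂, 0 ≤ h τ₁ τ₂) →
      (∀ τ₁ τ₂ t, h (τ₁ + t) (τ₂ + t) = h τ₁ τ₂) →
      (∀ τ₁ (F : Finset ℕ), ∑ τ₂ ∈ F, (if τ₁ < τ₂ then h τ₁ τ₂ else 0) ≤ 1) →
      ∀ τ'₂ : ℕ,
        ∑ τ'₁ ∈ Finset.Ico 1 (τ'₂ - 1),
          (1 + (τ'₂ : ℝ) - (τ'₁ : ℝ)) ^ α *
            ∑ τ₁ ∈ Finset.Icc (l ^ 2 * (τ'₁ - 1) + 1) (l ^ 2 * τ'₁),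
              ∑ τ₂ ∈ Finset.Icc (l ^ 2 * (τ'₂ - 1) + 1) (l ^ 2 * τ'₂),
                h τ₁ τ₂ * (1 + (τ₂ : ℝ) - (τ₁ : ℝ)) ^ (-α) *
                  ((l ^ 2 * τ'₂ : ℝ) - (τ₂ : ℝ) + 1) ^ (-(1/2) : ℝ)
        ≤ C * (l : ℝ) ^ ((1 : ℝ) - 2 * α) := by
  refine ⟨2 * 4 ^ α, by positivity, ?_⟩
  intro l hl h hpos hinv hsum τ'₂
  have hl0 : (0:ℝ) < (l:ℝ) := by positivity
  have hrpos : (0:ℝ) < 2 * 4 ^ α * (l:ℝ) ^ ((1:ℝ) - 2 * α) := by positivity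
  rcases lt_or_ge τ'₂ 3 with hτ | hτ
  · rw [Finset.Ico_eq_empty (by omega)]
    simp only [Finset.sum_empty]
    linarith
  -- main case : τ'₂ ≥ 3
  set L : ℕ := l ^ 2 with hLdef
  set K : ℝ := 4 ^ α * (l:ℝ) ^ (-(2*α)) with hKdef
  have hK : 0 ≤ K := by positivity
  set G : ℕ → ℝ := fun τ₂ => (((L * τ'₂ : ℕ) : ℝ) - (τ₂:ℝ) + 1) ^ (-(1/2) : ℝ) with hGdef
  have hGnn : ∀ τ₂ ∈ Finset.Icc (L * (τ'₂ - 1) + 1) (L * τ'₂), 0 ≤ G τ₂ := by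
    intro τ₂ hτ₂
    simp only [Finset.mem_Icc] at hτ₂
    apply Real.rpow_nonneg
    have : (τ₂ : ℝ) ≤ ((L * τ'₂ : ℕ) : ℝ) := by exact_mod_cast hτ₂.2
    linarith
  have hτ₂big : ∀ τ₂ ∈ Finset.Icc (L * (τ'₂ - 1) + 1) (L * τ'₂), L * (τ'₂ - 1) + 1 ≤ τ₂ := by
    intro τ₂ hτ₂; exact (Finset.mem_Icc.1 hτ₂).1
  -- Step 1: pointwise bound
  have step1 :
      ∑ τ'₁ ∈ Finset.Ico 1 (τ'₂ - 1),
          (1 + (τ'₂ : ℝ) - (τ'₁ : ℝ)) ^ α *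
            ∑ τ₁ ∈ Finset.Icc (L * (τ'₁ - 1) + 1) (L * τ'₁),
              ∑ τ₂ ∈ Finset.Icc (L * (τ'₂ - 1) + 1) (L * τ'₂),
                h τ₁ τ₂ * (1 + (τ₂ : ℝ) - (τ₁ : ℝ)) ^ (-α) * G τ₂
        ≤ ∑ τ'₁ ∈ Finset.Ico 1 (τ'₂ - 1),
            ∑ τ₁ ∈ Finset.Icc (L * (τ'₁ - 1) + 1) (L * τ'₁),
              ∑ τ₂ ∈ Finset.Icc (L * (τ'₂ - 1) + 1) (L * τ'₂),
                K * (h τ₁ τ₂ * G τ₂) := by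
    apply Finset.sum_le_sum
    intro τ'₁ hτ'₁
    rw [Finset.mul_sum]
    apply Finset.sum_le_sum
    intro τ₁ hτ₁
    rw [Finset.mul_sum]
    apply Finset.sum_le_sum
    intro τ₂ hτ₂
    simp only [Finset.mem_Ico, Finset.mem_Icc] at hτ'₁ hτ₁ hτ₂
    have hgap : τ'₁ + 2 ≤ τ'₂ := by omega
    have hτ'le : (τ'₁ : ℝ) + 2 ≤ (τ'₂ : ℝ) := by exact_mod_cast hgap
    have hF1 : (τ₁ : ℝ) ≤ (l:ℝ)^2 * (τ'₁ : ℝ) := by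
      have := hτ₁.2
      have : (τ₁:ℝ) ≤ ((L * τ'₁ : ℕ) : ℝ) := by exact_mod_cast this
      have hc : ((L * τ'₁ : ℕ) : ℝ) = (l:ℝ)^2 * (τ'₁:ℝ) := by push_cast [hLdef]; ring
      linarith [hc ▸ this]
    have hF2 : (l:ℝ)^2 * ((τ'₂:ℝ) - 1) + 1 ≤ (τ₂ : ℝ) := by
      have h1 := hτ₂.1
      have h2 : ((L * (τ'₂ - 1) + 1 : ℕ) : ℝ) ≤ (τ₂:ℝ) := by exact_mod_cast h1
      have hc : ((L * (τ'₂ - 1) + 1 : ℕ) : ℝ) = (l:ℝ)^2 * ((τ'₂:ℝ) - 1) + 1 := by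
        push_cast [hLdef, Nat.cast_sub (by omega : 1 ≤ τ'₂)]; ring
      linarith [hc ▸ h2]
    have hsq : (0:ℝ) ≤ (l:ℝ)^2 := by positivity
    have ha : (1:ℝ) ≤ 1 + (τ'₂ : ℝ) - (τ'₁ : ℝ) := by linarith
    have hb : (0:ℝ) < 1 + (τ₂ : ℝ) - (τ₁ : ℝ) := by nlinarith
    have hab : (l:ℝ)^2 * (1 + (τ'₂ : ℝ) - (τ'₁ : ℝ)) ≤ 4 * (1 + (τ₂ : ℝ) - (τ₁ : ℝ)) := by
      nlinarith [mul_nonneg hsq (by linarith : (0:ℝ) ≤ (τ'₂:ℝ) - (τ'₁:ℝ) - 2)]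
    have key := rpow_key α hα l hl _ _ ha hb hab
    have hGτ : 0 ≤ G τ₂ := hGnn τ₂ (Finset.mem_Icc.2 hτ₂)
    calc (1 + (τ'₂ : ℝ) - (τ'₁ : ℝ)) ^ α *
            (h τ₁ τ₂ * (1 + (τ₂ : ℝ) - (τ₁ : ℝ)) ^ (-α) * G τ₂)
        = ((1 + (τ'₂ : ℝ) - (τ'₁ : ℝ)) ^ α * (1 + (τ₂ : ℝ) - (τ₁ : ℝ)) ^ (-α)) *
            (h τ₁ τ₂ * G τ₂) := by ring
      _ ≤ K * (h τ₁ τ₂ * G τ₂) :=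
          mul_le_mul_of_nonneg_right key (mul_nonneg (hpos _ _) hGτ)
  -- Step 2: evaluate the RHS of step1
  have step2 :
      ∑ τ'₁ ∈ Finset.Ico 1 (τ'₂ - 1),
            ∑ τ₁ ∈ Finset.Icc (L * (τ'₁ - 1) + 1) (L * τ'₁),
              ∑ τ₂ ∈ Finset.Icc (L * (τ'₂ - 1) + 1) (L * τ'₂),
                K * (h τ₁ τ₂ * G τ₂)
        = K * ∑ τ₁ ∈ Finset.Icc 1 (L * (τ'₂ - 1 - 1)),
              ∑ τ₂ ∈ Finset.Icc (L * (τ'₂ - 1) + 1) (L * τ'₂), h τ₁ τ₂ * G τ₂ := by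
    rw [← block_union L (fun τ₁ => ∑ τ₂ ∈ Finset.Icc (L * (τ'₂ - 1) + 1) (L * τ'₂),
          h τ₁ τ₂ * G τ₂) (τ'₂ - 1)]
    rw [Finset.mul_sum]
    apply Finset.sum_congr rfl
    intro τ'₁ _
    rw [Finset.mul_sum]
    apply Finset.sum_congr rfl
    intro τ₁ _
    rw [Finset.mul_sum]
  -- Step 3: bound the double sum
  have hNlt : ∀ τ₁ ∈ Finset.Icc 1 (L * (τ'₂ - 1 - 1)),
      ∀ τ₂ ∈ Finset.Icc (L * (τ'₂ - 1) + 1) (L * τ'₂), τ₁ < τ₂ := by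
    intro τ₁ hτ₁ τ₂ hτ₂
    simp only [Finset.mem_Icc] at hτ₁ hτ₂
    have : L * (τ'₂ - 1 - 1) ≤ L * (τ'₂ - 1) := Nat.mul_le_mul_left L (by omega)
    omega
  have step3 :
      ∑ τ₁ ∈ Finset.Icc 1 (L * (τ'₂ - 1 - 1)),
              ∑ τ₂ ∈ Finset.Icc (L * (τ'₂ - 1) + 1) (L * τ'₂), h τ₁ τ₂ * G τ₂
        ≤ ∑ τ₂ ∈ Finset.Icc (L * (τ'₂ - 1) + 1) (L * τ'₂), G τ₂ := by
    rw [Finset.sum_comm]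
    apply Finset.sum_le_sum
    intro τ₂ hτ₂
    rw [← Finset.sum_mul]
    have h1 : ∑ τ₁ ∈ Finset.Icc 1 (L * (τ'₂ - 1 - 1)), h τ₁ τ₂ ≤ 1 :=
      trans_bound h hinv hsum τ₂ _ (fun x hx => hNlt x hx τ₂ hτ₂)
    calc (∑ τ₁ ∈ Finset.Icc 1 (L * (τ'₂ - 1 - 1)), h τ₁ τ₂) * G τ₂
        ≤ 1 * G τ₂ := mul_le_mul_of_nonneg_right h1 (hGnn τ₂ hτ₂)
      _ = G τ₂ := one_mul _
  -- Step 4: sum of G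
  have hLpos : 0 < L := by positivity
  have hbL : L ≤ L * τ'₂ := Nat.le_mul_of_pos_right L (by omega)
  have hsub : L * τ'₂ - L = L * (τ'₂ - 1) := by
    have h7 : L * (τ'₂ - 1) + L = L * τ'₂ := by
      conv_rhs => rw [show τ'₂ = (τ'₂ - 1) + 1 by omega]
      rw [Nat.mul_succ]
    omega
  have step4 : ∑ τ₂ ∈ Finset.Icc (L * (τ'₂ - 1) + 1) (L * τ'₂), G τ₂ ≤ 2 * (l:ℝ) := by
    have := reindex_sqrt (L * τ'₂) L hbL (-(1/2) : ℝ)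
    rw [hsub] at this
    rw [hGdef]
    rw [this]
    calc ∑ k ∈ Finset.Icc 1 L, (k:ℝ) ^ (-(1/2):ℝ) ≤ 2 * Real.sqrt L := sum_inv_sqrt L
      _ = 2 * (l:ℝ) := by
          rw [hLdef]
          push_cast
          rw [Real.sqrt_sq hl0.le]
  -- Combine
  calc ∑ τ'₁ ∈ Finset.Ico 1 (τ'₂ - 1),
          (1 + (τ'₂ : ℝ) - (τ'₁ : ℝ)) ^ α *
            ∑ τ₁ ∈ Finset.Icc (l ^ 2 * (τ'₁ - 1) + 1) (l ^ 2 * τ'₁),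
              ∑ τ₂ ∈ Finset.Icc (l ^ 2 * (τ'₂ - 1) + 1) (l ^ 2 * τ'₂),
                h τ₁ τ₂ * (1 + (τ₂ : ℝ) - (τ₁ : ℝ)) ^ (-α) *
                  ((l ^ 2 * τ'₂ : ℝ) - (τ₂ : ℝ) + 1) ^ (-(1/2) : ℝ)
      = ∑ τ'₁ ∈ Finset.Ico 1 (τ'₂ - 1),
          (1 + (τ'₂ : ℝ) - (τ'₁ : ℝ)) ^ α *
            ∑ τ₁ ∈ Finset.Icc (L * (τ'₁ - 1) + 1) (L * τ'₁),
              ∑ τ₂ ∈ Finset.Icc (L * (τ'₂ - 1) + 1) (L * τ'₂),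
                h τ₁ τ₂ * (1 + (τ₂ : ℝ) - (τ₁ : ℝ)) ^ (-α) * G τ₂ := by
        apply Finset.sum_congr rfl; intro τ'₁ _
        congr 1
        apply Finset.sum_congr rfl; intro τ₁ _
        apply Finset.sum_congr rfl; intro τ₂ _
        rw [hGdef]
        congr 2
        push_cast [hLdef]
        ring
    _ ≤ K * ∑ τ₁ ∈ Finset.Icc 1 (L * (τ'₂ - 1 - 1)),
              ∑ τ₂ ∈ Finset.Icc (L * (τ'₂ - 1) + 1) (L * τ'₂), h τ₁ τ₂ * G τ₂ := by
        rw [← step2]; exact step1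
    _ ≤ K * (2 * (l:ℝ)) := by
        apply mul_le_mul_of_nonneg_left _ hK
        exact le_trans step3 step4
    _ = 2 * 4 ^ α * (l:ℝ) ^ ((1:ℝ) - 2 * α) := by
        rw [hKdef]
        have : (l:ℝ) ^ (-(2*α)) * (l:ℝ) = (l:ℝ) ^ ((1:ℝ) - 2*α) := by
          nth_rewrite 2 [← Real.rpow_one (l:ℝ)]
          rw [← Real.rpow_add hl0]
          ring_nf
        calc 4 ^ α * (l:ℝ) ^ (-(2*α)) * (2 * (l:ℝ))
            = 2 * 4 ^ α * ((l:ℝ) ^ (-(2*α)) * (l:ℝ)) := by ring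
          _ = 2 * 4 ^ α * (l:ℝ) ^ ((1:ℝ) - 2*α) := by rw [this]
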